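/- arXiv:0711.1362 — 2 statements merged into one kernel-verified Lean document; each statement's English description precedes it below -/
import Mathlib

section
/- Suppose a Polish group G acts continuously on Polish spaces Y and Z, and X ⊆ Y × Z is a closed subset invariant under the diagonal action g·(y,z) = (g·y, g·z). Suppose there is (y₀, z₀) ∈ X with orbit G·(y₀,z₀) comeagre in X and G·y₀ comeagre in Y. Then for comeagrely many y ∈ Y, for comeagrely many z in the section X_y = {z : (y,z) ∈ X}, the orbit G·(y,z) is comeagre in X. -/
open Set Topology TopologicalSpace Pointwise

section MeagreBasics

variable {α : Type*} [TopologicalSpace α]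

private lemma isMeagre_of_isNowhereDense {s : Set α} (h : IsNowhereDense s) : IsMeagre s := by
  rw [isMeagre_iff_countable_union_isNowhereDense]
  exact ⟨{s}, by simpa, countable_singleton s, by simp⟩

private lemma isMeagre_union' {s t : Set α} (hs : IsMeagre s) (ht : IsMeagre t) :
    IsMeagre (s ∪ t) := by
  rw [IsMeagre, compl_union]; exact Filter.inter_mem hs ht

private lemma isMeagre_iUnion' {ι : Sort*} [Countable ι] {s : ι → Set α}
    (h : ∀ i, IsMeagre (s i)) : IsMeagre (⋃ i, s i) := by
  rw [IsMeagre, compl_iUnion]; exact countable_iInter_mem.mpr h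

private lemma isMeagre_biUnion' {ι : Type*} {t : Set ι} (ht : t.Countable) {s : ι → Set α}
    (h : ∀ i ∈ t, IsMeagre (s i)) : IsMeagre (⋃ i ∈ t, s i) := by
  rw [IsMeagre, compl_iUnion₂]
  exact (countable_bInter_mem ht).mpr h

private lemma isMeagre_mono' {s t : Set α} (hs : IsMeagre s) (h : t ⊆ s) : IsMeagre t :=
  hs.mono h

private lemma nonempty_interior_of_not_isMeagre {C : Set α} (hC : IsClosed C)
    (h : ¬ IsMeagre C) : (interior C).Nonempty := by
  rcases eq_empty_or_nonempty (interior C) with he | hne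
  · exact absurd (isMeagre_of_isNowhereDense (hC.isNowhereDense_iff.mpr he)) h
  · exact hne

private lemma isNowhereDense_diff_interior {C : Set α} (hC : IsClosed C) :
    IsNowhereDense (C \ interior C) := by
  rw [IsNowhereDense]
  by_contra hne
  obtain ⟨x, hx⟩ := nonempty_iff_ne_empty.mpr hne
  set B := interior (closure (C \ interior C)) with hB
  have hBo : IsOpen B := isOpen_interior
  have hBsub : B ⊆ C := by
    calc B ⊆ closure (C \ interior C) := interior_subset
    _ ⊆ closure C := closure_mono diff_subset
    _ = C := hC.closure_eq
  have hBint : B ⊆ interior C := interior_maximal hBsub hBo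
  have : x ∈ closure (C \ interior C) := interior_subset hx
  obtain ⟨y, hyB, hyD⟩ := mem_closure_iff.mp this B hBo hx
  exact hyD.2 (hBint hyB)

private lemma exists_closed_cover_of_isMeagre {s : Set α} (hs : IsMeagre s) :
    ∃ F : ℕ → Set α, (∀ n, IsClosed (F n)) ∧ (∀ n, IsMeagre (F n)) ∧ s ⊆ ⋃ n, F n := by
  rw [isMeagre_iff_countable_union_isNowhereDense] at hs
  obtain ⟨S, hnwd, hScnt, hcover⟩ := hs
  obtain ⟨f, hf⟩ := (hScnt.insert ∅).exists_eq_range (insert_nonempty _ _)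
  have hfm : ∀ n, IsNowhereDense (f n) := by
    intro n
    have : f n ∈ insert ∅ S := hf ▸ mem_range_self n
    rcases this with h | h
    · rw [h]; exact isNowhereDense_empty
    · exact hnwd _ h
  refine ⟨fun n => closure (f n), fun n => isClosed_closure,
    fun n => isMeagre_of_isNowhereDense (hfm n).closure, ?_⟩
  intro x hx
  obtain ⟨t, htS, hxt⟩ := hcover hx
  have : t ∈ insert ∅ S := mem_insert_of_mem _ htS
  rw [hf] at this
  obtain ⟨n, rfl⟩ := this
  exact mem_iUnion.mpr ⟨n, subset_closure hxt⟩

private lemma polish_baireSpace (α : Type*) [TopologicalSpace α] [PolishSpace α] :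
    BaireSpace α := by
  letI := upgradeIsCompletelyMetrizable α
  infer_instance

private lemma polish_t2Space (α : Type*) [TopologicalSpace α] [PolishSpace α] :
    T2Space α := by
  letI := upgradeIsCompletelyMetrizable α
  infer_instance

end MeagreBasics
section LocNM

variable {α : Type*} [TopologicalSpace α]

/-- Points near which `S` is locally non-meagre. -/
private def locNM (S : Set α) : Set α :=
  {x | ∀ U : Set α, IsOpen U → x ∈ U → ¬ IsMeagre (S ∩ U)}

private lemma isClosed_locNM (S : Set α) : IsClosed (locNM S) := by
  rw [← isOpen_compl_iff]
  have : (locNM S)ᶜ = ⋃ U ∈ {U : Set α | IsOpen U ∧ IsMeagre (S ∩ U)}, U := by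
    ext x
    simp only [mem_compl_iff, locNM, mem_setOf_eq, not_forall, mem_iUnion]
    constructor
    · rintro ⟨U, hUo, hxU, hm⟩
      exact ⟨U, ⟨hUo, not_not.mp hm⟩, hxU⟩
    · rintro ⟨U, ⟨hUo, hm⟩, hxU⟩
      exact ⟨U, hUo, hxU, not_not.mpr hm⟩
  rw [this]
  exact isOpen_biUnion fun U hU => hU.1

private lemma locNM_mono {S T : Set α} (h : S ⊆ T) : locNM S ⊆ locNM T := by
  intro x hx U hUo hxU hm
  exact hx U hUo hxU (hm.mono (inter_subset_inter_left _ h))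

private lemma locNM_subset_closure (S : Set α) : locNM S ⊆ closure S := by
  intro x hx
  rw [mem_closure_iff]
  intro U hUo hxU
  have := hx U hUo hxU
  rcases eq_empty_or_nonempty (S ∩ U) with he | hne
  · exact absurd (he ▸ IsMeagre.empty) this
  · exact hne.imp fun y hy => ⟨hy.2, hy.1⟩

private lemma isMeagre_diff_locNM [SecondCountableTopology α] (S : Set α) :
    IsMeagre (S \ locNM S) := by
  have hsub : S \ locNM S ⊆
      ⋃ U ∈ {U ∈ countableBasis α | IsMeagre (S ∩ U)}, S ∩ U := by
    rintro x ⟨hxS, hx⟩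
    simp only [locNM, mem_setOf_eq, not_forall] at hx
    obtain ⟨U, hUo, hxU, hm⟩ := hx
    rw [not_not] at hm
    obtain ⟨V, hVb, hxV, hVU⟩ :=
      (isBasis_countableBasis α).exists_subset_of_mem_open hxU hUo
    exact mem_biUnion ⟨hVb, hm.mono (inter_subset_inter_right _ hVU)⟩ ⟨hxS, hxV⟩
  refine (isMeagre_biUnion' ((countable_countableBasis α).mono (sep_subset _ _))
    fun U hU => hU.2).mono hsub

private lemma not_isMeagre_inter_locNM [SecondCountableTopology α] {S : Set α}
    (h : ¬ IsMeagre S) : ¬ IsMeagre (S ∩ locNM S) := by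
  intro hm
  refine h (isMeagre_mono' (isMeagre_union' hm (isMeagre_diff_locNM S)) ?_)
  intro x hx
  by_cases hl : x ∈ locNM S
  · exact Or.inl ⟨hx, hl⟩
  · exact Or.inr ⟨hx, hl⟩

/-- Localization for non-meagre Gδ sets: a non-meagre countable intersection of open
sets is comeagre in some nonempty open set. -/
private lemma exists_isOpen_isMeagre_diff_of_iInter [SecondCountableTopology α] [BaireSpace α]
    {Gs : ℕ → Set α} (hGo : ∀ n, IsOpen (Gs n)) (h : ¬ IsMeagre (⋂ n, Gs n)) :
    ∃ A : Set α, IsOpen A ∧ A.Nonempty ∧ IsMeagre (A \ ⋂ n, Gs n) := by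
  set T := ⋂ n, Gs n with hT
  set A := interior (locNM T) with hA
  have hAo : IsOpen A := isOpen_interior
  have hAne : A.Nonempty := by
    refine nonempty_interior_of_not_isMeagre (isClosed_locNM T) ?_
    intro hm
    exact (not_isMeagre_inter_locNM h) (hm.mono inter_subset_right)
  refine ⟨A, hAo, hAne, ?_⟩
  have heq : A \ T = ⋃ n, (A \ Gs n) := by
    ext x
    simp only [hT, mem_diff, mem_iInter, mem_iUnion, not_forall]
    tauto
  rw [heq]
  refine isMeagre_iUnion' fun n => isMeagre_of_isNowhereDense ?_
  -- A \ Gs n is nowhere dense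
  rw [IsNowhereDense]
  by_contra hne
  obtain ⟨x, hx⟩ := nonempty_iff_ne_empty.mpr hne
  set B := interior (closure (A \ Gs n)) with hB
  have hBo : IsOpen B := isOpen_interior
  -- B ∩ A is nonempty
  have hxA : x ∈ closure A := closure_mono diff_subset (interior_subset hx)
  obtain ⟨y, hyB, hyA⟩ := mem_closure_iff.mp hxA B hBo hx
  -- B ∩ A ∩ Gs n = ∅
  have hdisj : B ∩ A ∩ Gs n = ∅ := by
    by_contra hne2
    obtain ⟨w, hw⟩ := nonempty_iff_ne_empty.mpr hne2
    have hwB : w ∈ closure (A \ Gs n) := interior_subset hw.1.1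
    obtain ⟨u, hu, huAG⟩ := mem_closure_iff.mp hwB (B ∩ A ∩ Gs n)
      ((hBo.inter hAo).inter (hGo n)) hw
    exact huAG.2 hu.2
  -- but B ∩ A is a nonempty open set around a point of locNM T
  have hyl : y ∈ locNM T := interior_subset hyA
  have := hyl (B ∩ A) (hBo.inter hAo) ⟨hyB, hyA⟩
  refine this ?_
  have : T ∩ (B ∩ A) = ∅ := by
    rw [eq_empty_iff_forall_notMem]
    rintro w ⟨hwT, hwBA⟩
    have : w ∈ B ∩ A ∩ Gs n := ⟨hwBA, mem_iInter.mp hwT n⟩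
    rw [hdisj] at this
    exact this
  rw [this]
  exact IsMeagre.empty

end LocNM
section Analytic

variable {α : Type*} [TopologicalSpace α]

private def Cyl (s : List ℕ) : Set (ℕ → ℕ) :=
  {x | ∀ i, i < s.length → x i = s.getD i 0}

private lemma Cyl_nil : Cyl [] = univ := by
  ext x; simp [Cyl]

private lemma Cyl_succ (s : List ℕ) : Cyl s = ⋃ n, Cyl (s ++ [n]) := by
  ext x
  simp only [Cyl, mem_setOf_eq, mem_iUnion]
  constructor
  · intro h
    refine ⟨x s.length, fun i hi => ?_⟩
    simp only [List.length_append, List.length_cons, List.length_nil] at hi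
    rcases lt_or_eq_of_le (Nat.lt_succ_iff.mp hi) with hi' | hi'
    · rw [List.getD_append _ _ _ _ hi']
      exact h i hi'
    · rw [hi', List.getD_append_right _ _ _ _ le_rfl]
      simp
  · rintro ⟨n, hn⟩ i hi
    have := hn i (by simp; omega)
    rwa [List.getD_append _ _ _ _ hi] at this

/-- If the range of a continuous map from Baire space `ℕ → ℕ` is non-meagre, then it is
comeagre in some nonempty open set. (This is the Baire-property of analytic sets, in the
only form we need.) -/
private theorem exists_isOpen_isMeagre_diff_range_of_pi
    [SecondCountableTopology α] [BaireSpace α] [T2Space α]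
    (f : (ℕ → ℕ) → α) (hf : Continuous f) (h : ¬ IsMeagre (range f)) :
    ∃ A : Set α, IsOpen A ∧ A.Nonempty ∧ IsMeagre (A \ range f) := by
  classical
  set Bs : List ℕ → Set α := fun s => f '' Cyl s with hBs
  set H : List ℕ → Set α := fun s => locNM (Bs s) with hH
  have hBsucc : ∀ s, Bs s = ⋃ n, Bs (s ++ [n]) := by
    intro s
    rw [hBs]
    simp only
    rw [Cyl_succ s, image_iUnion]
  -- Claim 1 : the successor-differences are meagre
  have claim1 : ∀ s, IsMeagre (H s \ ⋃ n, H (s ++ [n])) := by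
    intro s
    by_contra hnm
    have hHcl : IsClosed (H s) := isClosed_locNM _
    set Gs : ℕ → Set α := fun n => interior (H s) ∩ (H (s ++ [n]))ᶜ with hGs
    have hGo : ∀ n, IsOpen (Gs n) := fun n =>
      isOpen_interior.inter (isClosed_locNM _).isOpen_compl
    have hGd : (⋂ n, Gs n) = interior (H s) ∩ ⋂ n, (H (s ++ [n]))ᶜ := by
      ext x
      simp only [hGs, mem_iInter, mem_inter_iff]
      exact ⟨fun h => ⟨(h 0).1, fun i => (h i).2⟩, fun h i => ⟨h.1, h.2 i⟩⟩
    have hsub : H s \ (⋃ n, H (s ++ [n])) ⊆ (⋂ n, Gs n) ∪ (H s \ interior (H s)) := by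
      rintro x ⟨hx, hxW⟩
      by_cases hxi : x ∈ interior (H s)
      · left
        rw [hGd]
        exact ⟨hxi, mem_iInter.mpr fun n hn => hxW (mem_iUnion.mpr ⟨n, hn⟩)⟩
      · right; exact ⟨hx, hxi⟩
    have hGnm : ¬ IsMeagre (⋂ n, Gs n) := by
      intro hm
      exact hnm (isMeagre_mono' (isMeagre_union' hm
        (isMeagre_of_isNowhereDense (isNowhereDense_diff_interior hHcl))) hsub)
    obtain ⟨A, hAo, hAne, hAm⟩ := exists_isOpen_isMeagre_diff_of_iInter hGo hGnm
    -- A ∩ ⋂ Gs is non-meagre, pick a point x₀ in it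
    have hAGnm : ¬ IsMeagre (A ∩ ⋂ n, Gs n) := by
      intro hm
      refine not_isMeagre_of_isOpen hAo hAne (isMeagre_mono' (isMeagre_union' hm hAm) ?_)
      intro x hx
      by_cases hxg : x ∈ ⋂ n, Gs n
      · exact Or.inl ⟨hx, hxg⟩
      · exact Or.inr ⟨hx, hxg⟩
    obtain ⟨x₀, hx₀A, hx₀G⟩ := nonempty_of_not_isMeagre hAGnm
    rw [hGd] at hx₀G
    have hx₀l : x₀ ∈ locNM (Bs s) := interior_subset hx₀G.1
    have hBA : ¬ IsMeagre (Bs s ∩ A) := hx₀l A hAo hx₀A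
    obtain ⟨n, hn⟩ : ∃ n, ¬ IsMeagre (Bs (s ++ [n]) ∩ A) := by
      by_contra hc
      push_neg at hc
      refine hBA ?_
      have : Bs s ∩ A = ⋃ n, (Bs (s ++ [n]) ∩ A) := by
        rw [hBsucc s, iUnion_inter]
      rw [this]
      exact isMeagre_iUnion' hc
    have hT1 : ¬ IsMeagre ((Bs (s ++ [n]) ∩ A) ∩ locNM (Bs (s ++ [n]) ∩ A)) :=
      not_isMeagre_inter_locNM hn
    refine hT1 (hAm.mono ?_)
    rintro x ⟨⟨hxB, hxA⟩, hxl⟩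
    refine ⟨hxA, ?_⟩
    intro hxG
    have hxH : x ∈ H (s ++ [n]) := locNM_mono inter_subset_left hxl
    have hxG' : x ∈ interior (H s) ∩ ⋂ n, (H (s ++ [n]))ᶜ := hGd ▸ hxG
    exact (mem_iInter.mp hxG'.2 n) hxH
  -- the union of all exceptional sets is meagre
  set E := ⋃ s : List ℕ, (H s \ ⋃ n, H (s ++ [n])) with hE
  have hEm : IsMeagre E := isMeagre_iUnion' claim1
  -- Claim 2 : H [] \ E ⊆ range f
  have claim2 : H [] \ E ⊆ range f := by
    rintro x ⟨hx0, hxE⟩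
    have step : ∀ s : List ℕ, x ∈ H s → ∃ n, x ∈ H (s ++ [n]) := by
      intro s hs
      by_contra hc
      push_neg at hc
      exact hxE (mem_iUnion.mpr ⟨s, hs, fun hmem => by
        obtain ⟨n, hn⟩ := mem_iUnion.mp hmem; exact hc n hn⟩)
    -- build the branch
    let Fk : ℕ → {s : List ℕ // x ∈ H s} := fun k =>
      Nat.rec (⟨[], hx0⟩ : {s : List ℕ // x ∈ H s})
        (fun _ p => ⟨p.1 ++ [Classical.choose (step p.1 p.2)],
          Classical.choose_spec (step p.1 p.2)⟩) k
    have hFsucc : ∀ k, (Fk (k + 1)).1 = (Fk k).1 ++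
        [Classical.choose (step (Fk k).1 (Fk k).2)] := fun k => rfl
    have hFlen : ∀ k, ((Fk k).1).length = k := by
      intro k
      induction k with
      | zero => rfl
      | succ k ih => rw [hFsucc k]; simp [ih]
    set σ : ℕ → ℕ := fun k => ((Fk (k + 1)).1).getD k 0 with hσ
    have hkey : ∀ k i, i < k → ((Fk k).1).getD i 0 = σ i := by
      intro k
      induction k with
      | zero => intro i hi; omega
      | succ k ih =>
        intro i hi
        rcases lt_or_eq_of_le (Nat.lt_succ_iff.mp hi) with hi' | hi'
        · rw [hFsucc k, List.getD_append _ _ _ _ (by rw [hFlen k]; exact hi')]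
          exact ih i hi'
        · subst hi'; rfl
    have hmemCyl : ∀ k, Cyl ((Fk k).1) = {y : ℕ → ℕ | ∀ i, i < k → y i = σ i} := by
      intro k
      ext y
      simp only [Cyl, mem_setOf_eq, hFlen k]
      constructor
      · intro h i hi; rw [h i hi, hkey k i hi]
      · intro h i hi; rw [h i hi, hkey k i hi]
    -- x = f σ
    have hxcl : ∀ k, x ∈ closure (Bs ((Fk k).1)) := fun k =>
      locNM_subset_closure _ (Fk k).2
    refine ⟨σ, ?_⟩
    by_contra hne
    obtain ⟨Wf, Wx, hWfo, hWxo, hfW, hxW, hdisj⟩ := t2_separation hne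
    have : f ⁻¹' Wf ∈ nhds σ := hf.continuousAt.preimage_mem_nhds (hWfo.mem_nhds hfW)
    obtain ⟨t, ⟨y, m, rfl⟩, hσt, htW⟩ :=
      (PiNat.isTopologicalBasis_cylinders (fun _ : ℕ => ℕ)).exists_subset_of_mem_open
        (mem_of_mem_nhds this) (hf.isOpen_preimage _ hWfo)
    have hcylsub : Cyl ((Fk m).1) ⊆ PiNat.cylinder y m := by
      intro w hw
      rw [hmemCyl m] at hw
      intro i hi
      rw [hw i hi]
      exact hσt i hi
    have hBsW : Bs ((Fk m).1) ⊆ Wf := by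
      rintro _ ⟨w, hw, rfl⟩
      exact htW (hcylsub hw)
    have hxclW : x ∈ closure Wf := closure_mono hBsW (hxcl m)
    obtain ⟨u, hu1, hu2⟩ := mem_closure_iff.mp hxclW Wx hWxo hxW
    exact (disjoint_left.mp hdisj hu2) hu1
  -- conclude
  have hrange : range f = Bs [] := by rw [hBs]; simp [Cyl_nil]
  have hHne : ¬ IsMeagre (H []) := by
    intro hm
    refine h ?_
    rw [hrange]
    refine isMeagre_mono' (isMeagre_union' hm (isMeagre_diff_locNM (Bs []))) ?_
    intro x hx
    by_cases hl : x ∈ H []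
    · exact Or.inl hl
    · exact Or.inr ⟨hx, hl⟩
  obtain ⟨x, hx⟩ := nonempty_interior_of_not_isMeagre (isClosed_locNM _) hHne
  refine ⟨interior (H []), isOpen_interior, ⟨x, hx⟩, ?_⟩
  refine isMeagre_mono' hEm ?_
  rintro w ⟨hw1, hw2⟩
  by_contra hwE
  exact hw2 (claim2 ⟨interior_subset hw1, hwE⟩)

/-- Any non-meagre continuous image of a Polish space is comeagre in some nonempty open set. -/
private theorem exists_isOpen_isMeagre_diff_range
    {β : Type*} [TopologicalSpace β] [PolishSpace β] [Nonempty β]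
    [SecondCountableTopology α] [BaireSpace α] [T2Space α]
    (f : β → α) (hf : Continuous f) (h : ¬ IsMeagre (range f)) :
    ∃ A : Set α, IsOpen A ∧ A.Nonempty ∧ IsMeagre (A \ range f) := by
  obtain ⟨g, hgc, hgs⟩ := PolishSpace.exists_nat_nat_continuous_surjective β
  have hr : range (f ∘ g) = range f := by
    rw [range_comp, hgs.range_eq, image_univ]
  obtain ⟨A, h1, h2, h3⟩ := exists_isOpen_isMeagre_diff_range_of_pi (f ∘ g)
    (hf.comp hgc) (by rwa [hr])
  exact ⟨A, h1, h2, by rwa [hr] at h3⟩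

end Analytic
section Orbit

variable {G : Type*} [Group G] [TopologicalSpace G] [IsTopologicalGroup G]
variable {α : Type*} [TopologicalSpace α] [MulAction G α] [ContinuousSMul G α]

private lemma isMeagre_smul_image {S : Set α} (h : IsMeagre S) (g : G) :
    IsMeagre ((fun a => g • a) '' S) := by
  have himg : (fun a => g • a) '' S = (fun a => g⁻¹ • a) ⁻¹' S := by
    ext a
    constructor
    · rintro ⟨b, hb, rfl⟩
      simpa [inv_smul_smul] using hb
    · intro ha
      exact ⟨g⁻¹ • a, ha, by simp [smul_inv_smul]⟩
  rw [himg]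
  exact h.preimage_of_isOpenMap (continuous_const_smul _) (isOpenMap_smul _)

private lemma orbit_cover [SecondCountableTopology G] {V : Set G} (hV : IsOpen V)
    (hne : V.Nonempty) :
    ∃ T : Set G, T.Countable ∧ (⋃ g ∈ T, (fun h => g * h) '' V) = univ := by
  obtain ⟨v, hv⟩ := hne
  have hcov : (⋃ g : G, (fun h => g * h) '' V) = univ := by
    rw [eq_univ_iff_forall]
    intro h
    exact mem_iUnion.mpr ⟨h * v⁻¹, v, hv, by group⟩
  obtain ⟨T, hTc, hTu⟩ := TopologicalSpace.isOpen_iUnion_countable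
    (fun g : G => (fun h => g * h) '' V) (fun g => (Homeomorph.mulLeft g).isOpenMap V hV)
  exact ⟨T, hTc, by rw [hTu, hcov]⟩

/-- If the orbit of `x₀` is comeagre, then the image of any nonempty open set of group
elements applied to `x₀` is non-meagre. -/
private lemma not_isMeagre_smul_orbit [SecondCountableTopology G] [BaireSpace α] (x₀ : α)
    (hO : IsMeagre {a : α | ¬ ∃ g : G, g • x₀ = a}) {V : Set G} (hV : IsOpen V)
    (hne : V.Nonempty) : ¬ IsMeagre ((fun g : G => g • x₀) '' V) := by
  intro hm
  obtain ⟨T, hTc, hTu⟩ := orbit_cover hV hne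
  have horb : IsMeagre {a : α | ∃ g : G, g • x₀ = a} := by
    have hsub : {a : α | ∃ g : G, g • x₀ = a} ⊆
        ⋃ g ∈ T, (fun a => g • a) '' ((fun g : G => g • x₀) '' V) := by
      rintro a ⟨g, rfl⟩
      have : g ∈ ⋃ t ∈ T, (fun h => t * h) '' V := by rw [hTu]; trivial
      obtain ⟨t, htT, hmem⟩ := mem_iUnion₂.mp this
      obtain ⟨v, hvV, hv⟩ := hmem
      refine mem_biUnion htT ⟨v • x₀, ⟨v, hvV, rfl⟩, ?_⟩
      rw [← hv, mul_smul]
    exact (isMeagre_biUnion' hTc fun g _ => isMeagre_smul_image hm g).mono hsub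
  haveI : Nonempty α := ⟨x₀⟩
  have : IsMeagre (univ : Set α) := by
    refine (isMeagre_union' horb hO).mono ?_
    intro a _
    by_cases h : ∃ g : G, g • x₀ = a
    · exact Or.inl h
    · exact Or.inr h
  exact not_isMeagre_of_isOpen isOpen_univ univ_nonempty this

/-- If the orbit of `x₀` is comeagre, the orbit map pulls back meagre sets to meagre sets. -/
private lemma isMeagre_preimage_orbitMap [SecondCountableTopology G] [BaireSpace G]
    [BaireSpace α] (x₀ : α)
    (hO : IsMeagre {a : α | ¬ ∃ g : G, g • x₀ = a}) {F : Set α} (hF : IsMeagre F) :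
    IsMeagre {g : G | g • x₀ ∈ F} := by
  obtain ⟨C, hCcl, hCm, hCcov⟩ := exists_closed_cover_of_isMeagre hF
  have hcont : Continuous (fun g : G => g • x₀) := continuous_id.smul continuous_const
  have hsub : {g : G | g • x₀ ∈ F} ⊆ ⋃ n, {g : G | g • x₀ ∈ C n} := by
    intro g hg
    obtain ⟨_, ⟨n, rfl⟩, hn⟩ := hCcov hg
    exact mem_iUnion.mpr ⟨n, hn⟩
  refine (isMeagre_iUnion' fun n => ?_).mono hsub
  by_contra hnm
  have hcl : IsClosed {g : G | g • x₀ ∈ C n} := (hCcl n).preimage hcont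
  obtain ⟨g₀, hg₀⟩ := nonempty_interior_of_not_isMeagre hcl hnm
  have himg : (fun g : G => g • x₀) '' interior {g : G | g • x₀ ∈ C n} ⊆ C n := by
    rintro _ ⟨g, hg, rfl⟩
    have := (interior_subset : interior {g : G | g • x₀ ∈ C n} ⊆ {g : G | g • x₀ ∈ C n}) hg
    exact this
  exact not_isMeagre_smul_orbit x₀ hO isOpen_interior ⟨g₀, hg₀⟩ ((hCm n).mono himg)

end Orbit
/-- Kuratowski–Ulam type theorem for invariant closed subsets of products:
if `X ⊆ Y × Z` is closed and diagonally invariant, with a point whose orbit is comeagre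
in `X` and whose first coordinate has comeagre orbit in `Y`, then for comeagrely many
`y` and comeagrely many `z` in the section `X_y`, the orbit of `(y,z)` is comeagre in `X`. -/
theorem stmt_6 (G Y Z : Type*) [Group G] [TopologicalSpace G] [IsTopologicalGroup G]
    [PolishSpace G] [TopologicalSpace Y] [PolishSpace Y] [TopologicalSpace Z]
    [PolishSpace Z] [MulAction G Y] [MulAction G Z]
    (hcY : Continuous fun p : G × Y => p.1 • p.2)
    (hcZ : Continuous fun p : G × Z => p.1 • p.2)
    (X : Set (Y × Z)) (hX : IsClosed X)
    (hinv : ∀ g : G, ∀ p ∈ X, ((g • p.1, g • p.2) : Y × Z) ∈ X)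
    (y₀ : Y) (z₀ : Z) (h₀ : (y₀, z₀) ∈ X)
    (horb : IsMeagre {p : X | ¬ ∃ g : G, ((g • y₀, g • z₀) : Y × Z) = (p : Y × Z)})
    (horbY : IsMeagre {y : Y | ¬ ∃ g : G, g • y₀ = y}) :
    {y : Y | IsMeagre {z : {z : Z // (y, z) ∈ X} |
        ¬ IsMeagre {p : X | ¬ ∃ g : G, ((g • y, g • (z : Z)) : Y × Z) = (p : Y × Z)}}}
      ∈ residual Y := by
  classical
  haveI : ContinuousSMul G Y := ⟨hcY⟩
  haveI : ContinuousSMul G Z := ⟨hcZ⟩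
  haveI : BaireSpace Y := polish_baireSpace Y
  haveI : T2Space Y := polish_t2Space Y
  haveI : BaireSpace G := polish_baireSpace G
  haveI : PolishSpace ↥X := hX.polishSpace
  haveI : BaireSpace ↥X := polish_baireSpace ↥X
  -- the orbit of (y₀, z₀)
  set O : Set (Y × Z) := {q : Y × Z | ∃ g : G, ((g • y₀, g • z₀) : Y × Z) = q} with hOdef
  have hOsmul : ∀ (g : G) (q : Y × Z), q ∈ O → ((g • q.1, g • q.2) : Y × Z) ∈ O := by
    intro g q hq
    rw [hOdef] at hq ⊢
    obtain ⟨h, hh⟩ := hq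
    subst hh
    exact ⟨g * h, by simp [mul_smul]⟩
  have hOinv : ∀ (g : G) (q : Y × Z), ((g • q.1, g • q.2) : Y × Z) ∈ O ↔ q ∈ O := by
    intro g q
    constructor
    · intro hq
      have := hOsmul g⁻¹ _ hq
      simpa [inv_smul_smul] using this
    · exact hOsmul g q
  -- the action of G on the subtype ↥X
  let smulX : G → ↥X → ↥X := fun g p =>
    ⟨((g • (p : Y × Z).1, g • (p : Y × Z).2) : Y × Z), hinv g p p.2⟩
  have hone : ∀ p : ↥X, smulX 1 p = p := by
    intro p
    apply Subtype.ext
    show (((1 : G) • (p : Y × Z).1, (1 : G) • (p : Y × Z).2) : Y × Z) = (p : Y × Z)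
    simp
  have hmul : ∀ (g h : G) (p : ↥X), smulX (g * h) p = smulX g (smulX h p) := by
    intro g h p
    apply Subtype.ext
    show (((g * h) • (p : Y × Z).1, (g * h) • (p : Y × Z).2) : Y × Z)
      = ((g • (h • (p : Y × Z).1), g • (h • (p : Y × Z).2)) : Y × Z)
    simp [mul_smul]
  letI instX : MulAction G (↥X) := { smul := smulX, one_smul := hone, mul_smul := hmul }
  haveI : ContinuousSMul G (↥X) := by
    refine ⟨?_⟩
    have hc : Continuous fun q : G × ↥X =>
        ((q.1 • (q.2 : Y × Z).1, q.1 • (q.2 : Y × Z).2) : Y × Z) :=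
      (hcY.comp (continuous_fst.prodMk
          (Continuous.fst (continuous_subtype_val.comp continuous_snd)))).prodMk
        (hcZ.comp (continuous_fst.prodMk
          (Continuous.snd (continuous_subtype_val.comp continuous_snd))))
    exact hc.subtype_mk _
  set p₀ : ↥X := ⟨(y₀, z₀), h₀⟩ with hp₀
  have hO' : IsMeagre {p : ↥X | ¬ ∃ g : G, g • p₀ = p} := by
    have heq : {p : ↥X | ¬ ∃ g : G, g • p₀ = p}
        = {p : ↥X | ¬ ∃ g : G, ((g • y₀, g • z₀) : Y × Z) = (p : Y × Z)} := by
      ext p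
      simp only [mem_setOf_eq, not_iff_not]
      constructor
      · rintro ⟨g, rfl⟩; exact ⟨g, rfl⟩
      · rintro ⟨g, hg⟩; exact ⟨g, Subtype.ext hg⟩
    rw [heq]; exact horb
  have hXO : IsMeagre {p : ↥X | (p : Y × Z) ∉ O} := by
    have heq : {p : ↥X | (p : Y × Z) ∉ O}
        = {p : ↥X | ¬ ∃ g : G, ((g • y₀, g • z₀) : Y × Z) = (p : Y × Z)} := by
      ext p; rw [hOdef]; rfl
    rw [heq]; exact horb
  -- countable basis of Z
  obtain ⟨U, hU⟩ := ((countable_countableBasis Z).insert ∅).exists_eq_range (insert_nonempty _ _)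
  have hUopen : ∀ k, IsOpen (U k) := by
    intro k
    have : U k ∈ insert ∅ (countableBasis Z) := hU ▸ mem_range_self k
    rcases this with h | h
    · rw [h]; exact isOpen_empty
    · exact isOpen_of_mem_countableBasis h
  have hUbasis : ∀ (W : Set Z) (z : Z), IsOpen W → z ∈ W → ∃ k, z ∈ U k ∧ U k ⊆ W := by
    intro W z hWo hzW
    obtain ⟨V, hVb, hzV, hVW⟩ := (isBasis_countableBasis Z).exists_subset_of_mem_open hzW hWo
    have hmem : V ∈ insert ∅ (countableBasis Z) := mem_insert_of_mem _ hVb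
    rw [hU] at hmem
    obtain ⟨k, rfl⟩ := hmem
    exact ⟨k, hzV, hVW⟩
  -- the fibre over y₀
  have hmkmem : ∀ (g : G) (z : {z : Z // (y₀, z) ∈ X}), ((g • y₀ : Y), g • (z : Z)) ∈ X :=
    fun g z => hinv g (y₀, (z : Z)) z.2
  set mkX : G → {z : Z // (y₀, z) ∈ X} → ↥X :=
    fun g z => ⟨((g • y₀ : Y), g • (z : Z)), hmkmem g z⟩ with hmkX
  have hmkXcont : ∀ g : G, Continuous fun z : {z : Z // (y₀, z) ∈ X} => mkX g z := by
    intro g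
    apply Continuous.subtype_mk
    exact continuous_const.prodMk ((continuous_const_smul g).comp continuous_subtype_val)
  -- CORE: the bad set in the fibre over y₀ is meagre
  have core : IsMeagre {z : {z : Z // (y₀, z) ∈ X} | ((y₀, (z : Z)) : Y × Z) ∉ O} := by
    by_contra hbad
    obtain ⟨F, hFcl, hFm, hFcov⟩ := exists_closed_cover_of_isMeagre hXO
    have cover : ∀ g : G, ∃ n k, (∃ z : {z : Z // (y₀, z) ∈ X}, g • (z : Z) ∈ U k) ∧
        (∀ z : {z : Z // (y₀, z) ∈ X}, g • (z : Z) ∈ U k → mkX g z ∈ F n) := by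
      intro g
      have hMsub : {z : {z : Z // (y₀, z) ∈ X} | ((y₀, (z : Z)) : Y × Z) ∉ O}
          ⊆ ⋃ n, {z : {z : Z // (y₀, z) ∈ X} | mkX g z ∈ F n} := by
        intro z hz
        have hnot : ((mkX g z : ↥X) : Y × Z) ∉ O := by
          intro hmem
          exact hz ((hOinv g ((y₀, (z : Z)) : Y × Z)).mp hmem)
        obtain ⟨_, ⟨n, rfl⟩, hn⟩ := hFcov hnot
        exact mem_iUnion.mpr ⟨n, hn⟩
      obtain ⟨n, hn⟩ : ∃ n, ¬ IsMeagre {z : {z : Z // (y₀, z) ∈ X} | mkX g z ∈ F n} := by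
        by_contra hc; push_neg at hc
        exact hbad ((isMeagre_iUnion' hc).mono hMsub)
      have hSecCl : IsClosed {z : {z : Z // (y₀, z) ∈ X} | mkX g z ∈ F n} :=
        (hFcl n).preimage (hmkXcont g)
      obtain ⟨zb, hzb⟩ := nonempty_interior_of_not_isMeagre hSecCl hn
      obtain ⟨W, hWo, hWeq⟩ := isOpen_induced_iff.mp (isOpen_interior :
        IsOpen (interior {z : {z : Z // (y₀, z) ∈ X} | mkX g z ∈ F n}))
      have hzbW : (zb : Z) ∈ W := by
        have : zb ∈ Subtype.val ⁻¹' W := hWeq ▸ hzb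
        exact this
      have hgWo : IsOpen (g • W) := hWo.smul g
      obtain ⟨k, hk1, hk2⟩ := hUbasis (g • W) (g • (zb : Z)) hgWo
        (smul_mem_smul_set hzbW)
      refine ⟨n, k, ⟨zb, hk1⟩, ?_⟩
      intro z hz
      have hzW : (z : Z) ∈ W := smul_mem_smul_set_iff.mp (hk2 hz)
      have hzint : z ∈ interior {z : {z : Z // (y₀, z) ∈ X} | mkX g z ∈ F n} := by
        rw [← hWeq]; exact hzW
      exact (interior_subset :
        interior {z : {z : Z // (y₀, z) ∈ X} | mkX g z ∈ F n} ⊆ _) hzint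
    -- choose a non-meagre "witness" set of group elements
    have hGcov : (univ : Set G) ⊆ ⋃ q : ℕ × ℕ, {g : G |
        (∃ z : {z : Z // (y₀, z) ∈ X}, g • (z : Z) ∈ U q.2) ∧
        (∀ z : {z : Z // (y₀, z) ∈ X}, g • (z : Z) ∈ U q.2 → mkX g z ∈ F q.1)} := by
      intro g _
      obtain ⟨n, k, h1, h2⟩ := cover g
      exact mem_iUnion.mpr ⟨(n, k), h1, h2⟩
    obtain ⟨⟨n, k⟩, hT⟩ : ∃ q : ℕ × ℕ, ¬ IsMeagre {g : G |
        (∃ z : {z : Z // (y₀, z) ∈ X}, g • (z : Z) ∈ U q.2) ∧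
        (∀ z : {z : Z // (y₀, z) ∈ X}, g • (z : Z) ∈ U q.2 → mkX g z ∈ F q.1)} := by
      by_contra hc; push_neg at hc
      exact not_isMeagre_of_isOpen isOpen_univ univ_nonempty
        ((isMeagre_iUnion' hc).mono hGcov)
    have hsmulcont : ∀ z : {z : Z // (y₀, z) ∈ X}, Continuous fun g : G => g • (z : Z) :=
      fun z => continuous_id.smul continuous_const
    have hmkcontG : ∀ z : {z : Z // (y₀, z) ∈ X}, Continuous fun g : G => mkX g z := by
      intro z
      apply Continuous.subtype_mk
      exact (continuous_id.smul continuous_const).prodMk (continuous_id.smul continuous_const)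
    have hAop : IsOpen {g : G | ∃ z : {z : Z // (y₀, z) ∈ X}, g • (z : Z) ∈ U k} := by
      have heq : {g : G | ∃ z : {z : Z // (y₀, z) ∈ X}, g • (z : Z) ∈ U k}
          = ⋃ z : {z : Z // (y₀, z) ∈ X}, (fun g : G => g • (z : Z)) ⁻¹' (U k) := by
        ext g; simp [mem_iUnion]
      rw [heq]
      exact isOpen_iUnion fun z => (hUopen k).preimage (hsmulcont z)
    have hCcl : IsClosed {g : G | ∀ z : {z : Z // (y₀, z) ∈ X},
        g • (z : Z) ∈ U k → mkX g z ∈ F n} := by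
      rw [← isOpen_compl_iff]
      have heq : {g : G | ∀ z : {z : Z // (y₀, z) ∈ X}, g • (z : Z) ∈ U k → mkX g z ∈ F n}ᶜ
          = ⋃ z : {z : Z // (y₀, z) ∈ X},
            ((fun g : G => g • (z : Z)) ⁻¹' (U k) ∩ (fun g : G => mkX g z) ⁻¹' (F n)ᶜ) := by
        ext g
        simp only [mem_compl_iff, mem_setOf_eq, not_forall, mem_iUnion, mem_inter_iff,
          mem_preimage, mem_compl_iff]
        exact exists_congr fun z => by tauto
      rw [heq]
      exact isOpen_iUnion fun z => ((hUopen k).preimage (hsmulcont z)).inter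
        ((hFcl n).isOpen_compl.preimage (hmkcontG z))
    set V' : Set G := {g : G | ∃ z : {z : Z // (y₀, z) ∈ X}, g • (z : Z) ∈ U k} ∩
      interior {g : G | ∀ z : {z : Z // (y₀, z) ∈ X}, g • (z : Z) ∈ U k → mkX g z ∈ F n}
      with hV'
    have hV'o : IsOpen V' := hAop.inter isOpen_interior
    have hV'ne : V'.Nonempty := by
      by_contra hc
      rw [not_nonempty_iff_eq_empty] at hc
      refine hT (isMeagre_mono' (isMeagre_of_isNowhereDense
        (isNowhereDense_diff_interior hCcl)) ?_)
      rintro g ⟨h1, h2⟩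
      refine ⟨h2, fun hi => ?_⟩
      have : g ∈ V' := ⟨h1, hi⟩
      rw [hc] at this
      exact this
    haveI : PolishSpace ↥V' := hV'o.polishSpace
    haveI : Nonempty ↥V' := hV'ne.to_subtype
    have hψ : Continuous fun v : ↥V' => (v : G) • y₀ :=
      continuous_subtype_val.smul continuous_const
    have hrng : range (fun v : ↥V' => (v : G) • y₀) = (fun g : G => g • y₀) '' V' :=
      (image_eq_range (fun g : G => g • y₀) V').symm
    have hrnm : ¬ IsMeagre (range fun v : ↥V' => (v : G) • y₀) := by
      rw [hrng]; exact not_isMeagre_smul_orbit y₀ horbY hV'o hV'ne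
    obtain ⟨A, hAo2, hAne2, hAm2⟩ := exists_isOpen_isMeagre_diff_range _ hψ hrnm
    -- a point of the orbit O with first coordinate in A and second in U k
    set Ω : Set ↥X := {p : ↥X | (p : Y × Z).1 ∈ A ∧ (p : Y × Z).2 ∈ U k} with hΩ
    have hΩo : IsOpen Ω :=
      (hAo2.preimage (Continuous.fst continuous_subtype_val)).inter
        ((hUopen k).preimage (Continuous.snd continuous_subtype_val))
    have hΩne : Ω.Nonempty := by
      have hAnm : ¬ IsMeagre A := not_isMeagre_of_isOpen hAo2 hAne2
      have hint : (A ∩ range fun v : ↥V' => (v : G) • y₀).Nonempty := by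
        refine nonempty_of_not_isMeagre fun hm =>
          hAnm (isMeagre_mono' (isMeagre_union' hm hAm2) ?_)
        intro y hy
        by_cases h : y ∈ range fun v : ↥V' => (v : G) • y₀
        · exact Or.inl ⟨hy, h⟩
        · exact Or.inr ⟨hy, h⟩
      obtain ⟨y', hy'A, v, hv⟩ := hint
      obtain ⟨z, hz⟩ := (v.2 : (v : G) ∈ V').1
      refine ⟨mkX (v : G) z, ⟨?_, hz⟩⟩
      show ((v : G) • y₀) ∈ A
      have hv' : (v : G) • y₀ = y' := hv
      rw [hv']; exact hy'A
    obtain ⟨p, hpΩ, hpO⟩ : ∃ p ∈ Ω, (p : Y × Z) ∈ O := by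
      by_contra hc
      push_neg at hc
      exact not_isMeagre_of_isOpen hΩo hΩne (hXO.mono fun p hp => hc p hp)
    obtain ⟨hpA, hpU⟩ := hpΩ
    have hpO' : ∃ h : G, ((h • y₀, h • z₀) : Y × Z) = (p : Y × Z) := by rwa [hOdef] at hpO
    obtain ⟨h, hh⟩ := hpO'
    have hhy : (h • y₀ : Y) = (p : Y × Z).1 := (Prod.ext_iff.mp hh).1
    have hhz : (h • z₀ : Z) = (p : Y × Z).2 := (Prod.ext_iff.mp hh).2
    -- the set N₀ of group elements
    set N₀ : Set G := ((fun g : G => g • y₀) ⁻¹' A) ∩ ((fun g : G => g • z₀) ⁻¹' (U k))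
      with hN₀def
    have hN₀o : IsOpen N₀ :=
      (hAo2.preimage (continuous_id.smul continuous_const)).inter
        ((hUopen k).preimage (continuous_id.smul continuous_const))
    have hN₀ne : N₀.Nonempty := ⟨h, by
      constructor
      · show h • y₀ ∈ A
        rw [hhy]; exact hpA
      · show h • z₀ ∈ U k
        rw [hhz]; exact hpU⟩
    have hexc : IsMeagre ((fun g : G => g • y₀) ⁻¹'
        (A \ range fun v : ↥V' => (v : G) • y₀)) :=
      isMeagre_preimage_orbitMap y₀ horbY hAm2
    have hNsub : N₀ \ ((fun g : G => g • y₀) ⁻¹' (A \ range fun v : ↥V' => (v : G) • y₀))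
        ⊆ {g : G | g • p₀ ∈ F n} := by
      rintro g ⟨⟨hgA, hgU⟩, hgnot⟩
      have hgrng : g • y₀ ∈ range fun v : ↥V' => (v : G) • y₀ := by
        by_contra hcon
        exact hgnot ⟨hgA, hcon⟩
      obtain ⟨v, hv⟩ := hgrng
      have hmemz : ((y₀ : Y), ((v : G)⁻¹ * g) • z₀) ∈ X := by
        have hx := hinv ((v : G)⁻¹ * g) (y₀, z₀) h₀
        have hy : (((v : G)⁻¹ * g) • y₀ : Y) = y₀ := by
          rw [mul_smul]
          have : (v : G) • y₀ = g • y₀ := hv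
          rw [← this, inv_smul_smul]
        simp only at hx
        rwa [hy] at hx
      set z : {z : Z // (y₀, z) ∈ X} := ⟨((v : G)⁻¹ * g) • z₀, hmemz⟩ with hzdef
      have hvz : (v : G) • (z : Z) = g • z₀ := by
        show (v : G) • (((v : G)⁻¹ * g) • z₀) = g • z₀
        rw [← mul_smul, mul_inv_cancel_left]
      have hzU : (v : G) • (z : Z) ∈ U k := by rw [hvz]; exact hgU
      have hvV' : (v : G) ∈ V' := v.2
      have hvT : (v : G) ∈ {g : G | ∀ z : {z : Z // (y₀, z) ∈ X},
          g • (z : Z) ∈ U k → mkX g z ∈ F n} :=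
        (interior_subset : interior {g : G | ∀ z : {z : Z // (y₀, z) ∈ X},
          g • (z : Z) ∈ U k → mkX g z ∈ F n} ⊆ _) hvV'.2
      have hF : mkX (v : G) z ∈ F n := hvT z hzU
      have hmkeq : mkX (v : G) z = g • p₀ := by
        apply Subtype.ext
        show (((v : G) • y₀ : Y), (v : G) • (z : Z)) = ((g • y₀ : Y), g • z₀)
        rw [Prod.mk.injEq]
        exact ⟨hv, hvz⟩
      rwa [hmkeq] at hF
    have hNnm : ¬ IsMeagre (N₀ \ ((fun g : G => g • y₀) ⁻¹'
        (A \ range fun v : ↥V' => (v : G) • y₀))) := by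
      intro hm
      refine not_isMeagre_of_isOpen hN₀o hN₀ne (isMeagre_mono' (isMeagre_union' hm hexc) ?_)
      intro g hg
      by_cases hc : g ∈ (fun g : G => g • y₀) ⁻¹' (A \ range fun v : ↥V' => (v : G) • y₀)
      · exact Or.inr hc
      · exact Or.inl ⟨hg, hc⟩
    exact hNnm ((isMeagre_preimage_orbitMap p₀ hO' (hFm n)).mono hNsub)
  -- TRANSFER to every point of the orbit of y₀
  have transfer : ∀ g : G, IsMeagre {z : {z : Z // ((g • y₀ : Y), z) ∈ X} |
      (((g • y₀ : Y), (z : Z)) : Y × Z) ∉ O} := by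
    intro g
    have hmem1 : ∀ z : {z : Z // (y₀, z) ∈ X}, ((g • y₀ : Y), g • (z : Z)) ∈ X :=
      fun z => hmkmem g z
    have hmem2 : ∀ w : {z : Z // ((g • y₀ : Y), z) ∈ X}, ((y₀ : Y), g⁻¹ • (w : Z)) ∈ X := by
      intro w
      have hx := hinv g⁻¹ ((g • y₀ : Y), (w : Z)) w.2
      simp only at hx
      rwa [inv_smul_smul] at hx
    let e : {z : Z // ((g • y₀ : Y), z) ∈ X} ≃ₜ {z : Z // (y₀, z) ∈ X} :=
      { toFun := fun w => ⟨g⁻¹ • (w : Z), hmem2 w⟩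
        invFun := fun z => ⟨g • (z : Z), hmem1 z⟩
        left_inv := fun w => Subtype.ext (smul_inv_smul g (w : Z))
        right_inv := fun z => Subtype.ext (inv_smul_smul g (z : Z))
        continuous_toFun := Continuous.subtype_mk
          ((continuous_const_smul _).comp continuous_subtype_val) _
        continuous_invFun := Continuous.subtype_mk
          ((continuous_const_smul _).comp continuous_subtype_val) _ }
    have hpre : {z : {z : Z // ((g • y₀ : Y), z) ∈ X} | (((g • y₀ : Y), (z : Z)) : Y × Z) ∉ O}
        = e ⁻¹' {z : {z : Z // (y₀, z) ∈ X} | ((y₀, (z : Z)) : Y × Z) ∉ O} := by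
      ext w
      simp only [mem_setOf_eq, mem_preimage]
      constructor
      · intro hw hmem
        apply hw
        have := (hOinv g ((y₀, g⁻¹ • (w : Z)) : Y × Z)).mpr hmem
        simpa [smul_inv_smul] using this
      · intro hw hmem
        apply hw
        have := (hOinv g⁻¹ (((g • y₀ : Y), (w : Z)) : Y × Z)).mpr hmem
        exact (by simpa [inv_smul_smul] using this : ((y₀, g⁻¹ • (w : Z)) : Y × Z) ∈ O)
    rw [hpre]
    exact core.preimage_of_isOpenMap e.continuous e.isOpenMap
  -- CONCLUSION
  have hsub : {y : Y | ∃ g : G, g • y₀ = y} ⊆ {y : Y | IsMeagre {z : {z : Z // (y, z) ∈ X} |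
      ¬ IsMeagre {p : X | ¬ ∃ g : G, ((g • y, g • (z : Z)) : Y × Z) = (p : Y × Z)}}} := by
    rintro y ⟨g, rfl⟩
    show IsMeagre _
    refine (transfer g).mono ?_
    intro z hz
    simp only [mem_setOf_eq] at hz ⊢
    intro hmem
    apply hz
    have hmem' : ∃ h : G, ((h • y₀, h • z₀) : Y × Z) = (((g • y₀ : Y), (z : Z)) : Y × Z) := by
      rwa [hOdef] at hmem
    obtain ⟨h, hh⟩ := hmem'
    have hh1 : (h • y₀ : Y) = g • y₀ := (Prod.ext_iff.mp hh).1
    have hh2 : (h • z₀ : Z) = (z : Z) := (Prod.ext_iff.mp hh).2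
    have hseteq : {p : ↥X | ¬ ∃ g' : G, ((g' • (g • y₀), g' • (z : Z)) : Y × Z) = (p : Y × Z)}
        = {p : ↥X | ¬ ∃ g' : G, ((g' • y₀, g' • z₀) : Y × Z) = (p : Y × Z)} := by
      ext p
      simp only [mem_setOf_eq, not_iff_not]
      constructor
      · rintro ⟨g', hg'⟩
        refine ⟨g' * h, ?_⟩
        have : (((g' * h) • y₀ : Y), (g' * h) • z₀)
            = ((g' • (g • y₀) : Y), g' • (z : Z)) := by
          rw [Prod.mk.injEq]
          exact ⟨by rw [mul_smul, hh1], by rw [mul_smul, hh2]⟩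
        rw [this, hg']
      · rintro ⟨g', hg'⟩
        refine ⟨g' * h⁻¹, ?_⟩
        have : (((g' * h⁻¹) • (g • y₀) : Y), (g' * h⁻¹) • (z : Z))
            = ((g' • y₀ : Y), g' • z₀) := by
          rw [Prod.mk.injEq]
          constructor
          · rw [← hh1, mul_smul, inv_smul_smul]
          · rw [← hh2, mul_smul, inv_smul_smul]
        rw [this, hg']
    rw [hseteq]
    exact horb
  have hres : {y : Y | ∃ g : G, g • y₀ = y} ∈ residual Y := by
    have h1 : {y : Y | ¬ ∃ g : G, g • y₀ = y}ᶜ ∈ residual Y := horbY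
    have h2 : {y : Y | ¬ ∃ g : G, g • y₀ = y}ᶜ = {y : Y | ∃ g : G, g • y₀ = y} := by
      ext y; simp
    rwa [h2] at h1
  exact Filter.mem_of_superset hres hsub
end

section
/- Let G be a Polish group and suppose the space of commuting (n+1)-tuples in G has a generic element (comeagre diagonal conjugacy orbit) and, for a fixed generic commuting n-tuple (g₁,…,g_n), comeagrely many h in the centralizer C(g₁,…,g_n) are such that (g₁,…,g_n,h) is generic among commuting (n+1)-tuples. Then any two such h, f are conjugate by an element of C(g₁,…,g_n); hence C(g₁,…,g_n) has a comeagre conjugacy class. -/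
instance (priority := 50) baireOfPolish {α : Type*} [TopologicalSpace α] [PolishSpace α] :
    BaireSpace α := by
  letI := TopologicalSpace.upgradeIsCompletelyMetrizable α
  infer_instance

def CommTuples (G : Type*) [Group G] (n : ℕ) : Set (Fin n → G) :=
  {t | ∀ i j, Commute (t i) (t j)}

def IsGenericTuple (G : Type*) [Group G] [TopologicalSpace G] (n : ℕ)
    (t : Fin n → G) : Prop :=
  t ∈ CommTuples G n ∧
    IsMeagre {s : CommTuples G n | ¬ ∃ k : G, ∀ i, k * t i * k⁻¹ = (s : Fin n → G) i}

lemma commTuples_isClosed (G : Type*) [Group G] [TopologicalSpace G] [IsTopologicalGroup G]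
    [T2Space G] (n : ℕ) : IsClosed (CommTuples G n) := by
  have : CommTuples G n = ⋂ i, ⋂ j, {t : Fin n → G | t i * t j = t j * t i} := by
    ext t; simp [CommTuples, Commute, SemiconjBy, Set.mem_iInter]
  rw [this]
  exact isClosed_iInter fun i => isClosed_iInter fun j =>
    isClosed_eq (by fun_prop) (by fun_prop)

lemma centralizer_isClosed (G : Type*) [Group G] [TopologicalSpace G] [IsTopologicalGroup G]
    [T2Space G] (s : Set G) : IsClosed ((Subgroup.centralizer s : Set G)) := by
  have : (Subgroup.centralizer s : Set G) = ⋂ m ∈ s, {k : G | m * k = k * m} := by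
    ext k; simp [Subgroup.mem_centralizer_iff, Set.mem_iInter]
  rw [this]
  exact isClosed_biInter fun m _ => isClosed_eq (by fun_prop) (by fun_prop)

lemma generic_conj (G : Type*) [Group G] [TopologicalSpace G] [IsTopologicalGroup G]
    [PolishSpace G] (n : ℕ) (g : Fin n → G) (h f : G)
    (hgen1 : IsGenericTuple G (n + 1) (Fin.snoc g h))
    (hgen2 : IsGenericTuple G (n + 1) (Fin.snoc g f)) :
    ∃ k : G, (∀ i, Commute k (g i)) ∧ k * h * k⁻¹ = f := by
  haveI : PolishSpace (CommTuples G (n + 1)) := (commTuples_isClosed G (n + 1)).polishSpace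
  haveI : Nonempty (CommTuples G (n + 1)) := ⟨⟨_, hgen1.1⟩⟩
  have hA : {s : CommTuples G (n + 1) |
      ∃ k : G, ∀ i : Fin (n + 1), k * (Fin.snoc g h : Fin (n + 1) → G) i * k⁻¹ = (s : Fin (n + 1) → G) i} ∈ residual _ := by
    have := hgen1.2
    rw [IsMeagre, Set.compl_setOf] at this
    simpa [not_not] using this
    
  have hB : {s : CommTuples G (n + 1) |
      ∃ k : G, ∀ i : Fin (n + 1), k * (Fin.snoc g f : Fin (n + 1) → G) i * k⁻¹ = (s : Fin (n + 1) → G) i} ∈ residual _ := by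
    have := hgen2.2
    rw [IsMeagre, Set.compl_setOf] at this
    simpa [not_not] using this
    
  obtain ⟨s, hs1, hs2⟩ := (dense_of_mem_residual (Filter.inter_mem hA hB)).nonempty.imp
    (fun s hs => hs)
  obtain ⟨k1, hk1⟩ := hs1
  obtain ⟨k2, hk2⟩ := hs2
  refine ⟨k2⁻¹ * k1, ?_, ?_⟩
  · intro i
    have a1 := hk1 (Fin.castSucc i)
    have a2 := hk2 (Fin.castSucc i)
    rw [Fin.snoc_castSucc] at a1 a2
    have : (k2⁻¹ * k1) * g i * (k2⁻¹ * k1)⁻¹ = g i := by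
      calc (k2⁻¹ * k1) * g i * (k2⁻¹ * k1)⁻¹ = k2⁻¹ * (k1 * g i * k1⁻¹) * k2 := by group
      _ = k2⁻¹ * (k2 * g i * k2⁻¹) * k2 := by rw [a1, ← a2]
      _ = g i := by group
    rw [mul_inv_eq_iff_eq_mul] at this
    exact this
  · have a1 := hk1 (Fin.last n)
    have a2 := hk2 (Fin.last n)
    rw [Fin.snoc_last] at a1 a2
    calc (k2⁻¹ * k1) * h * (k2⁻¹ * k1)⁻¹ = k2⁻¹ * (k1 * h * k1⁻¹) * k2 := by group
    _ = k2⁻¹ * (k2 * f * k2⁻¹) * k2 := by rw [a1, ← a2]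
    _ = f := by group

/-- If `(g₁,…,g_n)` is a generic commuting `n`-tuple in a Polish group `G` and
comeagrely many `h` in the centralizer `C(g₁,…,g_n)` make `(g₁,…,g_n,h)` a generic
commuting `(n+1)`-tuple, then any two such `h, f` are conjugate by an element of the
centralizer; hence the centralizer has a comeagre conjugacy class. -/
theorem stmt_18 (G : Type*) [Group G] [TopologicalSpace G] [IsTopologicalGroup G]
    [PolishSpace G] (n : ℕ) (g : Fin n → G)
    (hgen : IsGenericTuple G n g)
    (hmany : IsMeagre {h : Subgroup.centralizer (Set.range g) |
        ¬ IsGenericTuple G (n + 1) (Fin.snoc g (h : G))}) :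
    (∀ h f : G, (∀ i, Commute h (g i)) → (∀ i, Commute f (g i)) →
        IsGenericTuple G (n + 1) (Fin.snoc g h) →
        IsGenericTuple G (n + 1) (Fin.snoc g f) →
        ∃ k : G, (∀ i, Commute k (g i)) ∧ k * h * k⁻¹ = f) ∧
    ∃ c : Subgroup.centralizer (Set.range g),
      IsMeagre {x : Subgroup.centralizer (Set.range g) |
        ¬ ∃ k : Subgroup.centralizer (Set.range g), k * c * k⁻¹ = x} := by
  haveI : PolishSpace (Subgroup.centralizer (Set.range g)) :=
    (centralizer_isClosed G (Set.range g)).polishSpace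
  refine ⟨fun h f _ _ h1 h2 => generic_conj G n g h f h1 h2, ?_⟩
  have hres : {h : Subgroup.centralizer (Set.range g) |
      IsGenericTuple G (n + 1) (Fin.snoc g (h : G))} ∈ residual _ := by
    rw [IsMeagre, Set.compl_setOf] at hmany
    simpa [not_not] using hmany
  obtain ⟨c, hc⟩ := (dense_of_mem_residual hres).nonempty
  refine ⟨c, hmany.mono ?_⟩
  intro x hx
  simp only [Set.mem_setOf_eq] at hx ⊢
  intro hxgen
  obtain ⟨k, hk1, hk2⟩ := generic_conj G n g (c : G) (x : G) hc hxgen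
  have hkmem : k ∈ Subgroup.centralizer (Set.range g) := by
    rw [Subgroup.mem_centralizer_iff]
    rintro _ ⟨i, rfl⟩
    exact (hk1 i).symm
  exact hx ⟨⟨k, hkmem⟩, Subtype.ext (by simpa using hk2)⟩
end
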